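/- A linear map φ : W → W is a 1/2-derivation of the Witt algebra W if and only if there exists a finitely supported family (α_j)_{j ∈ ℤ} of complex numbers such that φ(e_i) = Σ_{j ∈ ℤ} α_j e_{i+j} for every i ∈ ℤ. -/

import Mathlib

/-- The Witt algebra bracket on the space `ℤ →₀ ℂ` with basis `e i = single i 1`,
given by `[e i, e j] = (i - j) e (i+j)`. -/
noncomputable def wittBracket (f g : ℤ →₀ ℂ) : ℤ →₀ ℂ :=
  f.sum fun i a => g.sum fun j b =>
    (a * b * ((i : ℂ) - (j : ℂ))) • Finsupp.single (i + j) (1 : ℂ)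

/-- The basis element `e i` of the Witt algebra. -/
noncomputable def we (i : ℤ) : ℤ →₀ ℂ := Finsupp.single i 1

lemma wb_we_right (f : ℤ →₀ ℂ) (j : ℤ) :
    wittBracket f (we j) = f.sum fun i a => (a * ((i:ℂ) - j)) • we (i + j) := by
  unfold wittBracket we
  refine Finsupp.sum_congr fun i _ => ?_
  rw [Finsupp.sum_single_index] <;> simp

lemma wb_we_left (g : ℤ →₀ ℂ) (i : ℤ) :
    wittBracket (we i) g = g.sum fun j b => (b * ((i:ℂ) - j)) • we (i + j) := by
  unfold wittBracket we
  rw [Finsupp.sum_single_index] <;> simp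

lemma wb_we_we (i j : ℤ) :
    wittBracket (we i) (we j) = (((i:ℂ) - j)) • we (i + j) := by
  rw [wb_we_left]
  unfold we
  rw [Finsupp.sum_single_index] <;> simp

lemma we_apply (k m : ℤ) : we k m = if k = m then 1 else 0 := by
  simp [we, Finsupp.single_apply]

lemma sum_we_apply (α : ℤ →₀ ℂ) (F : ℤ → ℂ → ℂ) (G : ℤ → ℤ)
    (hF : ∀ j, F j 0 = 0) (m j₀ : ℤ) (hj₀ : G j₀ = m) (hinj : ∀ j, G j = m → j = j₀) :
    (α.sum fun j c => (F j c) • we (G j)) m = F j₀ (α j₀) := by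
  rw [Finsupp.sum_apply]
  rw [Finsupp.sum_eq_single j₀]
  · simp [we_apply, hj₀]
  · intro b _ hb
    have : G b ≠ m := fun h => hb (hinj b h)
    simp [we_apply, this]
  · intro _
    simp [hF]

lemma wb_we_right_apply (f : ℤ →₀ ℂ) (j m : ℤ) :
    (wittBracket f (we j)) m = f (m - j) * (((m - j : ℤ):ℂ) - j) := by
  rw [wb_we_right]
  exact sum_we_apply f (fun i a => a * ((i:ℂ) - j)) (fun i => i + j)
    (by intro; simp) m (m - j) (show m - j + j = m by omega)
    (fun t ht => by beta_reduce at ht; omega)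

lemma wb_we_left_apply (g : ℤ →₀ ℂ) (i m : ℤ) :
    (wittBracket (we i) g) m = g (m - i) * ((i:ℂ) - ((m - i : ℤ):ℂ)) := by
  rw [wb_we_left]
  exact sum_we_apply g (fun j b => b * ((i:ℂ) - j)) (fun j => i + j)
    (by intro; simp) m (m - i) (show i + (m - i) = m by omega)
    (fun t ht => by beta_reduce at ht; omega)

lemma sum_shift_apply (α : ℤ →₀ ℂ) (i m : ℤ) :
    (α.sum fun j c => c • we (i + j)) m = α (m - i) := by
  have := sum_we_apply α (fun _ c => c) (fun j => i + j)
    (by intro; rfl) m (m - i) (show i + (m - i) = m by omega)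
    (fun t ht => by beta_reduce at ht; omega)
  simpa using this

lemma wb_add_left (f₁ f₂ g : ℤ →₀ ℂ) :
    wittBracket (f₁ + f₂) g = wittBracket f₁ g + wittBracket f₂ g := by
  unfold wittBracket
  rw [Finsupp.sum_add_index']
  · intro i
    simp
  · intro i a₁ a₂
    rw [← Finsupp.sum_add]
    refine Finsupp.sum_congr fun j _ => ?_
    rw [← add_smul]
    ring_nf
lemma wb_smul_left (r : ℂ) (f g : ℤ →₀ ℂ) :
    wittBracket (r • f) g = r • wittBracket f g := by
  unfold wittBracket
  rw [Finsupp.sum_smul_index (by intro i; simp), Finsupp.smul_sum]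
  refine Finsupp.sum_congr fun i _ => ?_
  rw [Finsupp.smul_sum]
  refine Finsupp.sum_congr fun j _ => ?_
  rw [smul_smul]
  ring_nf
lemma wb_add_right (f g₁ g₂ : ℤ →₀ ℂ) :
    wittBracket f (g₁ + g₂) = wittBracket f g₁ + wittBracket f g₂ := by
  unfold wittBracket
  rw [← Finsupp.sum_add]
  refine Finsupp.sum_congr fun i a => ?_
  rw [Finsupp.sum_add_index']
  · intro j; simp
  · intro j b₁ b₂
    rw [← add_smul]
    ring_nf
lemma wb_smul_right (r : ℂ) (f g : ℤ →₀ ℂ) :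
    wittBracket f (r • g) = r • wittBracket f g := by
  unfold wittBracket
  rw [Finsupp.smul_sum]
  refine Finsupp.sum_congr fun i a => ?_
  rw [Finsupp.sum_smul_index (by intro j; simp), Finsupp.smul_sum]
  refine Finsupp.sum_congr fun j _ => ?_
  rw [smul_smul]
  ring_nf

noncomputable def lb : (ℤ →₀ ℂ) →ₗ[ℂ] (ℤ →₀ ℂ) →ₗ[ℂ] (ℤ →₀ ℂ) :=
  LinearMap.mk₂ ℂ wittBracket wb_add_left wb_smul_left wb_add_right wb_smul_right

lemma wb_sum_left (α : ℤ →₀ ℂ) (F : ℤ → ℂ → (ℤ →₀ ℂ)) (y : ℤ →₀ ℂ) :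
    wittBracket (α.sum F) y = α.sum fun k c => wittBracket (F k c) y :=
  map_finsuppSum (lb.flip y) α F

lemma wb_sum_right (α : ℤ →₀ ℂ) (F : ℤ → ℂ → (ℤ →₀ ℂ)) (x : ℤ →₀ ℂ) :
    wittBracket x (α.sum F) = α.sum fun k c => wittBracket x (F k c) :=
  map_finsuppSum (lb x) α F

lemma backward_dir (φ : (ℤ →₀ ℂ) →ₗ[ℂ] (ℤ →₀ ℂ)) (α : ℤ →₀ ℂ)
    (hα : ∀ i : ℤ, φ (we i) = α.sum fun j c => c • we (i + j)) :
    ∀ x y : ℤ →₀ ℂ, φ (wittBracket x y) =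
        (1 / 2 : ℂ) • (wittBracket (φ x) y + wittBracket x (φ y)) := by
  have key : ∀ i j : ℤ, φ (wittBracket (we i) (we j)) =
      (1 / 2 : ℂ) • (wittBracket (φ (we i)) (we j) + wittBracket (we i) (φ (we j))) := by
    intro i j
    rw [wb_we_we, map_smul, hα, hα, hα, wb_sum_left, wb_sum_right,
      ← Finsupp.sum_add, Finsupp.smul_sum, Finsupp.smul_sum]
    refine Finsupp.sum_congr fun k _ => ?_
    rw [wb_smul_left, wb_smul_right, wb_we_we, wb_we_we]
    have h1 : i + k + j = i + j + k := by ring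
    have h2 : i + (j + k) = i + j + k := by ring
    rw [h1, h2]
    push_cast
    module
  have hB : lb.compr₂ φ = (1 / 2 : ℂ) • (lb.comp φ + lb.compl₂ φ) := by
    refine Finsupp.lhom_ext fun i b => ?_
    refine Finsupp.lhom_ext fun j d => ?_
    have hib : Finsupp.single i b = b • we i := by
      rw [we, Finsupp.smul_single, smul_eq_mul, mul_one]
    have hjd : Finsupp.single j d = d • we j := by
      rw [we, Finsupp.smul_single, smul_eq_mul, mul_one]
    rw [hib, hjd]
    simp only [LinearMap.compr₂_apply, LinearMap.smul_apply, LinearMap.add_apply,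
      LinearMap.comp_apply, LinearMap.compl₂_apply, map_smul, LinearMap.mk₂_apply, lb,
      LinearMap.smul_apply]
    rw [key i j]
  intro x y
  have := LinearMap.congr_fun (LinearMap.congr_fun hB x) y
  simpa only [LinearMap.compr₂_apply, LinearMap.smul_apply, LinearMap.add_apply,
    LinearMap.comp_apply, LinearMap.compl₂_apply, LinearMap.mk₂_apply, lb] using this

lemma forward_dir (φ : (ℤ →₀ ℂ) →ₗ[ℂ] (ℤ →₀ ℂ))
    (H : ∀ x y : ℤ →₀ ℂ, φ (wittBracket x y) =
        (1 / 2 : ℂ) • (wittBracket (φ x) y + wittBracket x (φ y))) :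
    ∃ α : ℤ →₀ ℂ, ∀ i : ℤ, φ (we i) = α.sum fun j c => c • we (i + j) := by
  set A : ℤ → ℤ → ℂ := fun k m => φ (we k) m with hAdef
  have E : ∀ i j m : ℤ, ((i:ℂ) - j) * A (i+j) m =
      (1/2) * (A i (m-j) * (((m-j:ℤ):ℂ) - j) + ((i:ℂ) - ((m-i:ℤ):ℂ)) * A j (m-i)) := by
    intro i j m
    have h := congrArg (fun v : ℤ →₀ ℂ => v m) (H (we i) (we j))
    beta_reduce at h
    rw [wb_we_we, map_smul, Finsupp.smul_apply, smul_eq_mul, Finsupp.smul_apply,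
      Finsupp.add_apply, wb_we_right_apply, wb_we_left_apply, smul_eq_mul] at h
    rw [h]
    ring
  have step1 : ∀ j m : ℤ, m ≠ 2*j → A j m = A 0 (m - j) := by
    intro j m hm
    have h := E 0 j m
    simp only [zero_add, sub_zero] at h
    push_cast at h
    have hne : ((m:ℂ) - 2*j) ≠ 0 := by
      intro hc
      apply hm
      have h2 : ((m:ℤ):ℂ) = ((2*j:ℤ):ℂ) := by push_cast; linear_combination hc
      exact_mod_cast h2
    apply mul_left_cancel₀ hne
    linear_combination 2 * h
  have step2 : ∀ j : ℤ, A j (2*j) = A 0 j := by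
    intro j
    by_cases hj1 : j = 1
    · subst hj1
      have h := E (-1) 2 2
      norm_num at h
      rw [step1 (-1) 0 (by norm_num), step1 2 3 (by norm_num)] at h
      norm_num at h
      show A 1 2 = A 0 1
      linear_combination (-1/3 : ℂ) * h
    by_cases hj2 : j = 2
    · subst hj2
      have h := E (-1) 3 4
      norm_num at h
      rw [step1 (-1) 1 (by norm_num), step1 3 5 (by norm_num)] at h
      norm_num at h
      show A 2 4 = A 0 2
      linear_combination (-1/4 : ℂ) * h
    · have h := E 1 (j-1) (2*j)
      rw [show (1:ℤ) + (j-1) = j by ring, show 2*j - (j-1) = j+1 by ring] at h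
      rw [step1 1 (j+1) (by omega), step1 (j-1) (2*j-1) (by omega)] at h
      rw [show j + 1 - 1 = j by ring, show 2*j - 1 - (j-1) = j by ring] at h
      push_cast at h
      have hne : ((2:ℂ) - j) ≠ 0 := by
        intro hc
        apply hj2
        have h2 : ((j:ℤ):ℂ) = ((2:ℤ):ℂ) := by push_cast; linear_combination -hc
        exact_mod_cast h2
      apply mul_left_cancel₀ hne
      linear_combination h
  have main : ∀ j m : ℤ, A j m = A 0 (m - j) := by
    intro j m
    by_cases h : m = 2*j
    · subst h
      rw [show 2*j - j = j by ring]
      exact step2 j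
    · exact step1 j m h
  refine ⟨φ (we 0), fun i => ?_⟩
  ext m
  rw [sum_shift_apply]
  exact main i m

/-- A linear map `φ` on the Witt algebra is a 1/2-derivation iff
there is a finitely supported family `(α_j)` with `φ (e i) = Σ_j α_j e (i+j)`. -/
theorem witt_half_derivation_iff (φ : (ℤ →₀ ℂ) →ₗ[ℂ] (ℤ →₀ ℂ)) :
    (∀ x y : ℤ →₀ ℂ, φ (wittBracket x y) =
        (1 / 2 : ℂ) • (wittBracket (φ x) y + wittBracket x (φ y))) ↔
    ∃ α : ℤ →₀ ℂ, ∀ i : ℤ, φ (we i) = α.sum fun j c => c • we (i + j) := by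
  constructor
  · exact forward_dir φ
  · rintro ⟨α, hα⟩
    exact backward_dir φ α hα
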